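/- Let (V_k)_{k≥1} be a Markov chain on a finite state space S with an irreducible and aperiodic transition matrix Q, let ν be its unique stationary distribution, and let μ be an initial distribution with supp μ = S. Let T be a finite set, π: S × S → T a function, and Y_k = π(V_k, V_{k+1}). Suppose H ≥ 0 is such that for almost every realisation (y₁, y₂, …) of the stationary hidden chain Y_k^{(ν)} = π(V_k^{(ν)}, V_{k+1}^{(ν)}), lim_{k→∞} −(1/k) log P[Y₁^{(ν)} = y₁, …, Y_k^{(ν)} = y_k] = H. Then lim_{k→∞} −(1/k) ∫ log P[Y₁ = y₁, …, Y_k = y_k] dP(y₁, y₂, …) = H, where the integral is over the law of the trajectory (Y₁, Y₂, …). -/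

import Mathlib

open MeasureTheory Filter Topology

/-- `n`-step transition probabilities of the kernel `Q` on a finite state space. -/
noncomputable def Qpow {S : Type} [Fintype S] [DecidableEq S] (Q : S → S → ℝ) :
    ℕ → S → S → ℝ
  | 0, s, t => if s = t then 1 else 0
  | (n + 1), s, t => ∑ u : S, Qpow Q n s u * Q u t

/-- Irreducibility of the transition matrix `Q`. -/
def QIrreducible {S : Type} [Fintype S] [DecidableEq S] (Q : S → S → ℝ) : Prop :=
  ∀ s t : S, ∃ n : ℕ, 1 ≤ n ∧ 0 < Qpow Q n s t

/-- Aperiodicity of the transition matrix `Q`. -/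
def QAperiodic {S : Type} [Fintype S] [DecidableEq S] (Q : S → S → ℝ) : Prop :=
  ∀ s : S, ∃ N : ℕ, ∀ n, N ≤ n → 0 < Qpow Q n s s

/-- `P[Y₁ = y₁, …, Y_k = y_k]` for the hidden Markov chain `Y_k = f(V_k, V_{k+1})`,
where `(V_k)` is the Markov chain with initial distribution `μ` and kernel `Q`. -/
noncomputable def hmmProb {S T : Type} [Fintype S] [DecidableEq S] [DecidableEq T]
    (μ : S → ℝ) (Q : S → S → ℝ) (f : S → S → T) (k : ℕ) (y : Fin k → T) : ℝ :=
  ∑ s : Fin (k + 1) → S,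
    if ∀ i : Fin k, f (s i.castSucc) (s i.succ) = y i then
      μ (s 0) * ∏ i : Fin k, Q (s i.castSucc) (s i.succ)
    else 0

/-- `V` is (a version of) the Markov chain on the finite state space `S` with initial
distribution `μ` and transition matrix `Q`, realized on the probability space `(Ω, P)`. -/
def IsMarkovChain {S : Type} [Fintype S] [DecidableEq S] {Ω : Type} [MeasurableSpace Ω]
    (P : Measure Ω) (V : ℕ → Ω → S) (μ : S → ℝ) (Q : S → S → ℝ) : Prop :=
  ∀ (n : ℕ) (s : ℕ → S),
    P {ω | ∀ i ≤ n, V i ω = s i} =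
      ENNReal.ofReal (μ (s 0) * ∏ i ∈ Finset.range n, Q (s i) (s (i + 1)))

set_option linter.unusedSectionVars false

open scoped ENNReal

section Aux
variable {S T : Type} [Fintype S] [DecidableEq S] [Fintype T] [DecidableEq T]

/-- weight of a finite path -/
noncomputable def pathW (μ : S → ℝ) (Q : S → S → ℝ) (k : ℕ) (s : Fin (k+1) → S) : ℝ :=
  μ (s 0) * ∏ i : Fin k, Q (s i.castSucc) (s i.succ)

lemma sum_path (Q : S → S → ℝ) (hQ1 : ∀ s, ∑ t, Q s t = 1) :
    ∀ (k : ℕ) (g : S → ℝ),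
      (∑ s : Fin (k+1) → S, g (s 0) * ∏ i : Fin k, Q (s i.castSucc) (s i.succ)) = ∑ a, g a
  | 0, g => by
    have h1 : (∑ s : Fin 1 → S, g (s 0) * ∏ i : Fin 0, Q (s i.castSucc) (s i.succ))
        = ∑ s : Fin 1 → S, g (s 0) := by simp
    rw [h1]
    exact Fintype.sum_equiv (Equiv.funUnique (Fin 1) S) _ _ (fun s => rfl)
  | (k+1), g => by
    have key : (∑ p : S × (Fin (k+1) → S),
            g p.1 * (Q p.1 (p.2 0) * ∏ i : Fin k, Q (p.2 i.castSucc) (p.2 i.succ)))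
        = ∑ s : Fin (k+2) → S, g (s 0) * ∏ i : Fin (k+1), Q (s i.castSucc) (s i.succ) := by
      refine Fintype.sum_equiv (Fin.consEquiv (fun _ : Fin (k+2) => S)) _ _ (fun p => ?_)
      obtain ⟨a, t⟩ := p
      simp only [Fin.consEquiv_apply]
      rw [Fin.cons_zero, Fin.prod_univ_succ]
      simp only [← Fin.succ_castSucc, Fin.castSucc_zero, Fin.cons_zero, Fin.cons_succ]
    rw [← key]
    rw [Fintype.sum_prod_type]
    have h2 : ∀ a : S, (∑ t : Fin (k+1) → S,
        g a * (Q a (t 0) * ∏ i : Fin k, Q (t i.castSucc) (t i.succ)))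
        = ∑ t : Fin (k+1) → S, (fun b => g a * Q a b) (t 0) * ∏ i : Fin k, Q (t i.castSucc) (t i.succ) := by
      intro a; refine Finset.sum_congr rfl (fun t _ => ?_); ring
    calc (∑ a : S, ∑ t : Fin (k+1) → S,
          g a * (Q a (t 0) * ∏ i : Fin k, Q (t i.castSucc) (t i.succ)))
        = ∑ a : S, ∑ b : S, g a * Q a b := by
          refine Finset.sum_congr rfl (fun a _ => ?_)
          rw [h2 a, sum_path Q hQ1 k (fun b => g a * Q a b)]
      _ = ∑ a : S, g a := by
          refine Finset.sum_congr rfl (fun a _ => ?_)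
          rw [← Finset.mul_sum, hQ1 a, mul_one]


variable {μ ν : S → ℝ} {Q : S → S → ℝ} {f : S → S → T}

/-- observable signature of a path -/
def ysig (f : S → S → T) (k : ℕ) (s : Fin (k+1) → S) : Fin k → T :=
  fun i => f (s i.castSucc) (s i.succ)

lemma pathW_nonneg (hμ0 : ∀ a, 0 ≤ μ a) (hQ0 : ∀ a b, 0 ≤ Q a b) (k : ℕ)
    (s : Fin (k+1) → S) : 0 ≤ pathW μ Q k s :=
  mul_nonneg (hμ0 _) (Finset.prod_nonneg fun _ _ => hQ0 _ _)

lemma sum_pathW (hμ1 : ∑ a, μ a = 1) (hQ1 : ∀ a, ∑ b, Q a b = 1) (k : ℕ) :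
    ∑ s : Fin (k+1) → S, pathW μ Q k s = 1 := by
  rw [show (∑ s : Fin (k+1) → S, pathW μ Q k s)
      = ∑ s : Fin (k+1) → S, μ (s 0) * ∏ i : Fin k, Q (s i.castSucc) (s i.succ) from rfl,
    sum_path Q hQ1 k μ, hμ1]

lemma hmmProb_eq_sum (k : ℕ) (y : Fin k → T) :
    hmmProb μ Q f k y = ∑ s : Fin (k+1) → S, if ysig f k s = y then pathW μ Q k s else 0 := by
  refine Finset.sum_congr rfl (fun s _ => ?_)
  refine if_congr ?_ rfl rfl
  exact (funext_iff).symm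

lemma sum_hmmProb (hμ1 : ∑ a, μ a = 1) (hQ1 : ∀ a, ∑ b, Q a b = 1) (k : ℕ) :
    ∑ y : Fin k → T, hmmProb μ Q f k y = 1 := by
  have : ∀ y : Fin k → T, hmmProb μ Q f k y
      = ∑ s : Fin (k+1) → S, if ysig f k s = y then pathW μ Q k s else 0 :=
    fun y => hmmProb_eq_sum k y
  rw [Finset.sum_congr rfl (fun y _ => this y), Finset.sum_comm]
  rw [Finset.sum_congr rfl (fun s (_ : s ∈ Finset.univ) =>
    Finset.sum_ite_eq Finset.univ (ysig f k s) (fun _ => pathW μ Q k s))]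
  simp only [Finset.mem_univ, if_true]
  exact sum_pathW hμ1 hQ1 k

lemma hmmProb_nonneg (hμ0 : ∀ a, 0 ≤ μ a) (hQ0 : ∀ a b, 0 ≤ Q a b) (k : ℕ)
    (y : Fin k → T) : 0 ≤ hmmProb μ Q f k y := by
  rw [hmmProb_eq_sum]
  refine Finset.sum_nonneg (fun s _ => ?_)
  split
  · exact pathW_nonneg hμ0 hQ0 k s
  · exact le_refl 0

lemma pathW_le_hmmProb (hμ0 : ∀ a, 0 ≤ μ a) (hQ0 : ∀ a b, 0 ≤ Q a b) (k : ℕ)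
    (s : Fin (k+1) → S) : pathW μ Q k s ≤ hmmProb μ Q f k (ysig f k s) := by
  rw [hmmProb_eq_sum]
  have := Finset.single_le_sum (f := fun s' : Fin (k+1) → S =>
      if ysig f k s' = ysig f k s then pathW μ Q k s' else 0)
    (fun s' _ => by
      split
      · exact pathW_nonneg hμ0 hQ0 k s'
      · exact le_refl 0) (Finset.mem_univ s)
  simpa using this

lemma hmmProb_le_one (hμ0 : ∀ a, 0 ≤ μ a) (hQ0 : ∀ a b, 0 ≤ Q a b)
    (hμ1 : ∑ a, μ a = 1) (hQ1 : ∀ a, ∑ b, Q a b = 1) (k : ℕ) (y : Fin k → T) :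
    hmmProb μ Q f k y ≤ 1 := by
  rw [← sum_hmmProb (f := f) hμ1 hQ1 k]
  exact Finset.single_le_sum (fun y' _ => hmmProb_nonneg hμ0 hQ0 k y') (Finset.mem_univ y)

lemma hmmProb_le_mul {K : ℝ} (h : ∀ a, μ a ≤ K * ν a) (hQ0 : ∀ a b, 0 ≤ Q a b)
    (k : ℕ) (y : Fin k → T) :
    hmmProb μ Q f k y ≤ K * hmmProb ν Q f k y := by
  rw [hmmProb_eq_sum, hmmProb_eq_sum, Finset.mul_sum]
  refine Finset.sum_le_sum (fun s _ => ?_)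
  split
  · rw [show K * pathW ν Q k s = (K * ν (s 0)) * ∏ i : Fin k, Q (s i.castSucc) (s i.succ) by
      rw [pathW]; ring]
    exact mul_le_mul_of_nonneg_right (h _) (Finset.prod_nonneg fun _ _ => hQ0 _ _)
  · rw [mul_zero]


lemma Qpow_nonneg (hQ0 : ∀ a b, 0 ≤ Q a b) : ∀ (n : ℕ) (a b : S), 0 ≤ Qpow Q n a b
  | 0, a, b => by rw [Qpow]; split <;> norm_num
  | (n+1), a, b => by
    rw [Qpow]
    exact Finset.sum_nonneg fun u _ => mul_nonneg (Qpow_nonneg hQ0 n a u) (hQ0 u b)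

lemma stationary_Qpow (hνstat : ∀ t, ∑ s, ν s * Q s t = ν t) :
    ∀ (n : ℕ) (t : S), ∑ s, ν s * Qpow Q n s t = ν t
  | 0, t => by simp [Qpow, Finset.sum_ite_eq']
  | (n+1), t => by
    simp only [Qpow, Finset.mul_sum]
    rw [Finset.sum_comm]
    calc (∑ u : S, ∑ s : S, ν s * (Qpow Q n s u * Q u t))
        = ∑ u : S, (∑ s : S, ν s * Qpow Q n s u) * Q u t := by
          refine Finset.sum_congr rfl fun u _ => ?_
          rw [Finset.sum_mul]
          exact Finset.sum_congr rfl fun s _ => by ring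
      _ = ∑ u : S, ν u * Q u t := by
          refine Finset.sum_congr rfl fun u _ => ?_
          rw [stationary_Qpow hνstat n u]
      _ = ν t := hνstat t

lemma nu_pos [Nonempty S] (hQ0 : ∀ a b, 0 ≤ Q a b) (hirr : QIrreducible Q)
    (hν0 : ∀ s, 0 ≤ ν s) (hν1 : ∑ s, ν s = 1)
    (hνstat : ∀ t, ∑ s, ν s * Q s t = ν t) : ∀ t, 0 < ν t := by
  have hex : ∃ s₀, 0 < ν s₀ := by
    by_contra h
    push_neg at h
    have : (∑ s, ν s) ≤ 0 := Finset.sum_nonpos fun s _ => h s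
    rw [hν1] at this; linarith
  obtain ⟨s₀, hs₀⟩ := hex
  intro t
  obtain ⟨n, -, hn⟩ := hirr s₀ t
  rw [← stationary_Qpow hνstat n t]
  have hterm : 0 < ν s₀ * Qpow Q n s₀ t := mul_pos hs₀ hn
  refine lt_of_lt_of_le hterm ?_
  exact Finset.single_le_sum
    (fun s _ => mul_nonneg (hν0 s) (Qpow_nonneg hQ0 n s t)) (Finset.mem_univ s₀)

lemma exists_r [Nonempty S] (hQ0 : ∀ a b, 0 ≤ Q a b) (hQ1 : ∀ a, ∑ b, Q a b = 1) :
    ∃ r : ℝ, 0 < r ∧ r ≤ 1 ∧ ∀ a b, 0 < Q a b → r ≤ Q a b := by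
  classical
  have hne : ((Finset.univ.filter fun p : S × S => 0 < Q p.1 p.2).image
      fun p : S × S => Q p.1 p.2).Nonempty := by
    have a : S := Classical.arbitrary S
    have hb : ∃ b, 0 < Q a b := by
      by_contra h
      push_neg at h
      have h1 : (∑ b, Q a b) ≤ 0 := Finset.sum_nonpos fun b _ => h b
      rw [hQ1 a] at h1; linarith
    obtain ⟨b, hb⟩ := hb
    exact ⟨Q a b, Finset.mem_image.2 ⟨(a, b), Finset.mem_filter.2 ⟨Finset.mem_univ _, hb⟩, rfl⟩⟩
  set E := ((Finset.univ.filter fun p : S × S => 0 < Q p.1 p.2).image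
      fun p : S × S => Q p.1 p.2) with hE
  refine ⟨min (E.min' hne) 1, ?_, min_le_right _ _, ?_⟩
  · refine lt_min ?_ one_pos
    have hmem : E.min' hne ∈ Finset.image (fun p : S × S => Q p.1 p.2)
        (Finset.filter (fun p : S × S => 0 < Q p.1 p.2) Finset.univ) := E.min'_mem hne
    obtain ⟨p, hp, hpe⟩ := Finset.mem_image.1 hmem
    rw [← hpe]
    exact (Finset.mem_filter.1 hp).2
  · intro a b hab
    refine le_trans (min_le_left _ _) (Finset.min'_le E _ ?_)
    exact Finset.mem_image.2 ⟨(a, b), Finset.mem_filter.2 ⟨Finset.mem_univ _, hab⟩, rfl⟩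

lemma exists_min_pos [Nonempty S] (g : S → ℝ) (hg : ∀ s, 0 < g s) :
    ∃ m : ℝ, 0 < m ∧ m ≤ 1 ∧ ∀ s, m ≤ g s := by
  classical
  have hne : (Finset.univ.image g).Nonempty :=
    ⟨g (Classical.arbitrary S), Finset.mem_image_of_mem g (Finset.mem_univ _)⟩
  refine ⟨min ((Finset.univ.image g).min' hne) 1, ?_, min_le_right _ _, ?_⟩
  · refine lt_min ?_ one_pos
    obtain ⟨s, -, hs⟩ := Finset.mem_image.1 ((Finset.univ.image g).min'_mem hne)
    rw [← hs]; exact hg s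
  · intro s
    exact le_trans (min_le_left _ _)
      (Finset.min'_le _ _ (Finset.mem_image_of_mem g (Finset.mem_univ _)))

lemma exists_ratio [Nonempty S] (μ ν : S → ℝ) (hν : ∀ s, 0 < ν s) :
    ∃ K : ℝ, 1 ≤ K ∧ ∀ s, μ s ≤ K * ν s := by
  classical
  have hne : (Finset.univ.image fun s => μ s / ν s).Nonempty :=
    ⟨_, Finset.mem_image_of_mem _ (Finset.mem_univ (Classical.arbitrary S))⟩
  refine ⟨max ((Finset.univ.image fun s => μ s / ν s).max' hne) 1, le_max_right _ _, ?_⟩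
  intro s
  have h1 : μ s / ν s ≤ max ((Finset.univ.image fun s => μ s / ν s).max' hne) 1 :=
    le_trans (Finset.le_max' (Finset.univ.image fun s => μ s / ν s) (μ s / ν s)
      (Finset.mem_image_of_mem (fun s => μ s / ν s) (Finset.mem_univ s))) (le_max_left _ _)
  have := mul_le_mul_of_nonneg_right h1 (le_of_lt (hν s))
  rwa [div_mul_cancel₀ _ (ne_of_gt (hν s))] at this

lemma hmmProb_pos_lower {m r : ℝ} (hν0 : ∀ a, 0 ≤ ν a)
    (hm : ∀ a, m ≤ ν a) (hm0 : 0 < m)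
    (hr : ∀ a b, 0 < Q a b → r ≤ Q a b) (hr0 : 0 < r) (hQ0 : ∀ a b, 0 ≤ Q a b)
    (k : ℕ) (y : Fin k → T) (hpos : 0 < hmmProb ν Q f k y) :
    m * r ^ k ≤ hmmProb ν Q f k y := by
  classical
  rw [hmmProb_eq_sum] at hpos
  have hex : ∃ s : Fin (k+1) → S,
      0 < (if ysig f k s = y then pathW ν Q k s else 0) := by
    by_contra h
    push_neg at h
    have : (∑ s : Fin (k+1) → S, if ysig f k s = y then pathW ν Q k s else 0) ≤ 0 :=
      Finset.sum_nonpos fun s _ => h s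
    linarith
  obtain ⟨s, hs⟩ := hex
  have hy : ysig f k s = y := by
    by_contra h; rw [if_neg h] at hs; linarith
  rw [if_pos hy] at hs
  have hprod : 0 < ∏ i : Fin k, Q (s i.castSucc) (s i.succ) := by
    rcases lt_or_eq_of_le (Finset.prod_nonneg
      (fun (i : Fin k) (_ : i ∈ Finset.univ) => hQ0 (s i.castSucc) (s i.succ))) with h | h
    · exact h
    · exfalso; rw [pathW, ← h, mul_zero] at hs; linarith
  have hfac : ∀ i : Fin k, r ≤ Q (s i.castSucc) (s i.succ) := by
    intro i
    refine hr _ _ ?_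
    rcases lt_or_eq_of_le (hQ0 (s i.castSucc) (s i.succ)) with h | h
    · exact h
    · exfalso
      have hz := Finset.prod_eq_zero (f := fun i : Fin k => Q (s i.castSucc) (s i.succ))
        (Finset.mem_univ i) h.symm
      rw [hz] at hprod; linarith
  have h1 : m * r ^ k ≤ pathW ν Q k s := by
    rw [pathW]
    have h2 : r ^ k ≤ ∏ i : Fin k, Q (s i.castSucc) (s i.succ) := by
      have := Finset.prod_le_prod (s := Finset.univ)
        (f := fun _ : Fin k => r) (g := fun i : Fin k => Q (s i.castSucc) (s i.succ))
        (fun _ _ => le_of_lt hr0) (fun i _ => hfac i)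
      simpa using this
    exact mul_le_mul (hm _) h2 (pow_nonneg (le_of_lt hr0) k) (hν0 _)
  refine le_trans h1 ?_
  rw [← hy]
  exact pathW_le_hmmProb hν0 hQ0 k s


/-- level-`k` cylinder set -/
def Cyl {Ω' : Type} (V' : ℕ → Ω' → S) (k : ℕ) (s : Fin (k+1) → S) : Set Ω' :=
  {ω | ∀ i : Fin (k+1), V' (i : ℕ) ω = s i}

variable {Ω' : Type} [MeasurableSpace Ω'] {P' : Measure Ω'} {V' : ℕ → Ω' → S}

lemma mem_cyl_self (k : ℕ) (ω : Ω') : ω ∈ Cyl V' k (fun i => V' (i : ℕ) ω) :=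
  fun _ => rfl

lemma cyl_unique {k : ℕ} {s : Fin (k+1) → S} {ω : Ω'} (h : ω ∈ Cyl V' k s) :
    s = fun i : Fin (k+1) => V' (i : ℕ) ω :=
  funext fun i => (h i).symm

lemma measure_cyl (hV' : IsMarkovChain P' V' ν Q) (k : ℕ) (s : Fin (k+1) → S) :
    P' (Cyl V' k s) = ENNReal.ofReal (pathW ν Q k s) := by
  classical
  set se : ℕ → S := fun n => if h : n < k + 1 then s ⟨n, h⟩ else s 0 with hse
  have hset : {ω | ∀ i ≤ k, V' i ω = se i} = Cyl V' k s := by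
    ext ω
    constructor
    · intro h i
      have h1 := h (i : ℕ) (Nat.lt_succ_iff.1 i.isLt)
      rw [h1, hse]
      simp only [i.isLt, dif_pos]
    · intro h n hn
      have h1 := h ⟨n, Nat.lt_succ_of_le hn⟩
      rw [hse]
      simp only [Nat.lt_succ_of_le hn, dif_pos]
      exact h1
  have hval : ν (se 0) * ∏ i ∈ Finset.range k, Q (se i) (se (i + 1)) = pathW ν Q k s := by
    rw [pathW]
    congr 1
    · rw [← Fin.prod_univ_eq_prod_range (fun n => Q (se n) (se (n + 1))) k]
      refine Finset.prod_congr rfl fun i _ => ?_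
      have e1 : se (i : ℕ) = s i.castSucc := by
        rw [hse]
        have hlt : (i : ℕ) < k + 1 := Nat.lt_succ_of_lt i.isLt
        simp only [hlt, dif_pos]
        exact congrArg s (Fin.ext (by simp))
      have e2 : se ((i : ℕ) + 1) = s i.succ := by
        rw [hse]
        have hlt : (i : ℕ) + 1 < k + 1 := Nat.succ_lt_succ i.isLt
        simp only [hlt, dif_pos]
        exact congrArg s (Fin.ext (by simp))
      rw [e1, e2]
  rw [← hset, hV' k se, hval]

lemma measure_biUnion_cyl [IsProbabilityMeasure P'] (hV' : IsMarkovChain P' V' ν Q)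
    (hν0 : ∀ a, 0 ≤ ν a) (hQ0 : ∀ a b, 0 ≤ Q a b)
    (hν1 : ∑ a, ν a = 1) (hQ1 : ∀ a, ∑ b, Q a b = 1)
    (k : ℕ) (U : Finset (Fin (k+1) → S)) :
    P' (⋃ s ∈ U, Cyl V' k s) = ENNReal.ofReal (∑ s ∈ U, pathW ν Q k s) := by
  classical
  have hub : ∀ W : Finset (Fin (k+1) → S),
      P' (⋃ s ∈ W, Cyl V' k s) ≤ ENNReal.ofReal (∑ s ∈ W, pathW ν Q k s) := by
    intro W
    refine le_trans (measure_biUnion_finset_le W _) ?_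
    rw [Finset.sum_congr rfl (fun s (_ : s ∈ W) => measure_cyl hV' k s)]
    rw [← ENNReal.ofReal_sum_of_nonneg (fun s _ => pathW_nonneg hν0 hQ0 k s)]
  refine le_antisymm (hub U) ?_
  have hcover : (⋃ s ∈ U, Cyl V' k s) ∪ (⋃ s ∈ Uᶜ, Cyl V' k s) = Set.univ := by
    ext ω
    simp only [Set.mem_union, Set.mem_iUnion, Set.mem_univ, iff_true]
    by_cases h : (fun i : Fin (k+1) => V' (i : ℕ) ω) ∈ U
    · exact Or.inl ⟨_, h, mem_cyl_self k ω⟩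
    · exact Or.inr ⟨_, Finset.mem_compl.2 h, mem_cyl_self k ω⟩
  have h1 : (1 : ℝ≥0∞) ≤ P' (⋃ s ∈ U, Cyl V' k s) + P' (⋃ s ∈ Uᶜ, Cyl V' k s) := by
    calc (1 : ℝ≥0∞) = P' Set.univ := (measure_univ).symm
      _ = P' ((⋃ s ∈ U, Cyl V' k s) ∪ (⋃ s ∈ Uᶜ, Cyl V' k s)) := by rw [hcover]
      _ ≤ _ := measure_union_le _ _
  have hsum : (∑ s ∈ U, pathW ν Q k s) + (∑ s ∈ Uᶜ, pathW ν Q k s) = 1 := by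
    rw [Finset.sum_add_sum_compl]
    exact sum_pathW hν1 hQ1 k
  have h2 : P' (⋃ s ∈ Uᶜ, Cyl V' k s) ≤ ENNReal.ofReal (∑ s ∈ Uᶜ, pathW ν Q k s) := hub Uᶜ
  have h3 : ENNReal.ofReal (∑ s ∈ U, pathW ν Q k s)
      + ENNReal.ofReal (∑ s ∈ Uᶜ, pathW ν Q k s) = 1 := by
    rw [← ENNReal.ofReal_add (Finset.sum_nonneg fun s _ => pathW_nonneg hν0 hQ0 k s)
      (Finset.sum_nonneg fun s _ => pathW_nonneg hν0 hQ0 k s), hsum, ENNReal.ofReal_one]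
  have h4 : ENNReal.ofReal (∑ s ∈ U, pathW ν Q k s)
      + ENNReal.ofReal (∑ s ∈ Uᶜ, pathW ν Q k s)
      ≤ P' (⋃ s ∈ U, Cyl V' k s) + ENNReal.ofReal (∑ s ∈ Uᶜ, pathW ν Q k s) := by
    rw [h3]
    exact le_trans h1 (add_le_add le_rfl h2)
  exact (ENNReal.add_le_add_iff_right ENNReal.ofReal_ne_top).1 h4

lemma bad_mass_tendsto [Nonempty S] [IsProbabilityMeasure P'] (hV' : IsMarkovChain P' V' ν Q)
    (hν0 : ∀ a, 0 ≤ ν a) (hQ0 : ∀ a b, 0 ≤ Q a b)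
    (hν1 : ∑ a, ν a = 1) (hQ1 : ∀ a, ∑ b, Q a b = 1)
    (bad : (k : ℕ) → Finset (Fin (k+1) → S))
    (N : Set Ω') (hN0 : P' N = 0)
    (hconv : ∀ ω, ω ∉ N → ∃ m, ∀ k, m ≤ k → (fun i : Fin (k+1) => V' (i : ℕ) ω) ∉ bad k) :
    Tendsto (fun k => ∑ s ∈ bad k, pathW ν Q k s) atTop (𝓝 (0 : ℝ)) := by
  classical
  set Hm : (k : ℕ) → (Fin (k+1) → S) → Set Ω' :=
    fun k s => toMeasurable P' (Cyl V' k s) with hHm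
  have hcylH : ∀ (k : ℕ) (s : Fin (k+1) → S), Cyl V' k s ⊆ Hm k s :=
    fun k s => subset_toMeasurable P' _
  have hHmeas : ∀ (k : ℕ) (s : Fin (k+1) → S), MeasurableSet (Hm k s) :=
    fun k s => measurableSet_toMeasurable P' _
  have hHval : ∀ (k : ℕ) (s : Fin (k+1) → S), P' (Hm k s) = P' (Cyl V' k s) :=
    fun k s => measure_toMeasurable _
  -- hulls of distinct cylinders intersect in null sets
  have hint : ∀ (k : ℕ) (s t : Fin (k+1) → S), s ≠ t → P' (Hm k s ∩ Hm k t) = 0 := by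
    intro k s t hst
    have hu2 : P' (Cyl V' k s ∪ Cyl V' k t) = P' (Cyl V' k s) + P' (Cyl V' k t) := by
      have h := measure_biUnion_cyl hV' hν0 hQ0 hν1 hQ1 k {s, t}
      rw [show (⋃ u ∈ ({s, t} : Finset _), Cyl V' k u)
          = Cyl V' k s ∪ Cyl V' k t by simp] at h
      rw [Finset.sum_pair hst] at h
      rw [h, measure_cyl hV' k s, measure_cyl hV' k t,
        ENNReal.ofReal_add (pathW_nonneg hν0 hQ0 k s) (pathW_nonneg hν0 hQ0 k t)]
    have key : P' (Hm k s ∪ Hm k t) + P' (Hm k s ∩ Hm k t)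
        ≤ P' (Hm k s ∪ Hm k t) + 0 := by
      rw [add_zero, measure_union_add_inter (Hm k s) (hHmeas k t), hHval, hHval, ← hu2]
      exact measure_mono (Set.union_subset_union (hcylH k s) (hcylH k t))
    have := (ENNReal.add_le_add_iff_left (measure_ne_top P' _)).1 key
    exact le_antisymm this zero_le
  set B : (k : ℕ) → Set Ω' := fun k => ⋃ s ∈ bad k, Cyl V' k s with hB
  set B' : (k : ℕ) → Set Ω' :=
    fun k => (⋃ s ∈ bad k, Hm k s) \ (⋃ s ∈ (bad k)ᶜ, Hm k s) with hB'
  set Z : (k : ℕ) → Set Ω' :=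
    fun k => ⋃ s ∈ bad k, ⋃ t ∈ (bad k)ᶜ, Hm k s ∩ Hm k t with hZ
  have hZ0 : ∀ k, P' (Z k) = 0 := by
    intro k
    show P' (⋃ s ∈ bad k, ⋃ t ∈ (bad k)ᶜ, Hm k s ∩ Hm k t) = 0
    simp only [← Finset.mem_coe]
    rw [measure_biUnion_null_iff (Finset.countable_toSet _)]
    intro s hs
    rw [measure_biUnion_null_iff (Finset.countable_toSet _)]
    intro t ht
    rw [Finset.mem_coe] at hs ht
    refine hint k s t fun hts => ?_
    rw [hts] at hs
    exact (Finset.mem_compl.1 ht) hs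
  have hB'meas : ∀ k, MeasurableSet (B' k) := fun k =>
    ((bad k).measurableSet_biUnion fun s _ => hHmeas k s).diff
      (((bad k)ᶜ).measurableSet_biUnion fun s _ => hHmeas k s)
  have hB'B : ∀ k, B' k ⊆ B k := by
    intro k ω hω
    obtain ⟨hin, hout⟩ := hω
    have hu : ω ∈ Cyl V' k (fun i => V' (i : ℕ) ω) := mem_cyl_self k ω
    by_cases hmem : (fun i : Fin (k+1) => V' (i : ℕ) ω) ∈ bad k
    · exact Set.mem_biUnion hmem hu
    · exfalso
      exact hout (Set.mem_biUnion (Finset.mem_compl.2 hmem) (hcylH k _ hu))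
  have hBB' : ∀ k, B k ⊆ B' k ∪ Z k := by
    intro k ω hω
    obtain ⟨s, hs, hωs⟩ := Set.mem_iUnion₂.1 hω
    by_cases hout : ω ∈ ⋃ t ∈ (bad k)ᶜ, Hm k t
    · obtain ⟨t, ht, hωt⟩ := Set.mem_iUnion₂.1 hout
      exact Or.inr (Set.mem_biUnion hs (Set.mem_biUnion ht ⟨hcylH k s hωs, hωt⟩))
    · exact Or.inl ⟨Set.mem_biUnion hs (hcylH k s hωs), hout⟩
  have hBval : ∀ k, P' (B k) = ENNReal.ofReal (∑ s ∈ bad k, pathW ν Q k s) :=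
    fun k => measure_biUnion_cyl hV' hν0 hQ0 hν1 hQ1 k (bad k)
  have hB'val : ∀ k, P' (B' k) = ENNReal.ofReal (∑ s ∈ bad k, pathW ν Q k s) := by
    intro k
    refine le_antisymm ?_ ?_
    · rw [← hBval k]
      exact measure_mono (hB'B k)
    · rw [← hBval k]
      calc P' (B k) ≤ P' (B' k ∪ Z k) := measure_mono (hBB' k)
        _ ≤ P' (B' k) + P' (Z k) := measure_union_le _ _
        _ = P' (B' k) := by rw [hZ0 k, add_zero]
  set D : ℕ → Set Ω' := fun m => ⋃ (k : ℕ), ⋃ (_ : m ≤ k), B' k with hD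
  have hDmeas : ∀ m, MeasurableSet (D m) :=
    fun m => MeasurableSet.iUnion fun k => MeasurableSet.iUnion fun _ => hB'meas k
  have hDanti : Antitone D := by
    intro a b hab
    refine Set.iUnion₂_subset fun k hk => ?_
    exact Set.subset_iUnion₂ (s := fun k _ => B' k) k (hab.trans hk)
  have hDint : (⋂ m, D m) ⊆ N ∪ ⋃ k, Z k := by
    intro ω hω
    by_contra hn
    rw [Set.mem_union] at hn
    push_neg at hn
    obtain ⟨hωN, hωZ⟩ := hn
    obtain ⟨m, hm⟩ := hconv ω hωN
    have hωm := Set.mem_iInter.1 hω m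
    obtain ⟨k, hk, hωk⟩ := Set.mem_iUnion₂.1 hωm
    have hωB : ω ∈ B k := hB'B k hωk
    obtain ⟨s, hs, hωs⟩ := Set.mem_iUnion₂.1 hωB
    have := cyl_unique hωs
    rw [this] at hs
    exact hm k hk hs
  have hDzero : P' (⋂ m, D m) = 0 := by
    refine le_antisymm ?_ zero_le
    refine le_trans (measure_mono hDint) ?_
    rw [measure_union_null hN0 (measure_iUnion_null hZ0)]
  have htend : Tendsto (fun m => P' (D m)) atTop (𝓝 0) := by
    have := tendsto_measure_iInter_atTop (μ := P')
      (fun m => (hDmeas m).nullMeasurableSet) hDanti ⟨0, measure_ne_top P' _⟩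
    rw [hDzero] at this
    exact this
  have hle2 : ∀ k, ENNReal.ofReal (∑ s ∈ bad k, pathW ν Q k s) ≤ P' (D k) := by
    intro k
    rw [← hB'val k]
    exact measure_mono (Set.subset_iUnion₂ (s := fun j _ => B' j) k le_rfl)
  have htend2 : Tendsto (fun k => ENNReal.ofReal (∑ s ∈ bad k, pathW ν Q k s))
      atTop (𝓝 0) :=
    tendsto_of_tendsto_of_tendsto_of_le_of_le tendsto_const_nhds htend
      (fun k => zero_le) hle2
  have htend3 := ((ENNReal.tendsto_toReal (by simp)).comp htend2 :)
  rw [ENNReal.toReal_zero] at htend3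
  refine htend3.congr fun k => ?_
  exact ENNReal.toReal_ofReal (Finset.sum_nonneg fun s _ => pathW_nonneg hν0 hQ0 k s)


lemma pathW_le_mul {K : ℝ} (h : ∀ a, μ a ≤ K * ν a) (hQ0 : ∀ a b, 0 ≤ Q a b)
    (k : ℕ) (s : Fin (k+1) → S) : pathW μ Q k s ≤ K * pathW ν Q k s := by
  rw [pathW, pathW, ← mul_assoc]
  exact mul_le_mul_of_nonneg_right (h _) (Finset.prod_nonneg fun _ _ => hQ0 _ _)

lemma sum_y_weight (k : ℕ) (φ : (Fin k → T) → ℝ) :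
    ∑ y : Fin k → T, hmmProb μ Q f k y * φ y
      = ∑ s : Fin (k+1) → S, pathW μ Q k s * φ (ysig f k s) := by
  classical
  have h1 : ∀ y : Fin k → T, hmmProb μ Q f k y * φ y
      = ∑ s : Fin (k+1) → S, if ysig f k s = y then pathW μ Q k s * φ y else 0 := by
    intro y
    rw [hmmProb_eq_sum, Finset.sum_mul]
    refine Finset.sum_congr rfl fun s _ => ?_
    split <;> simp
  rw [Finset.sum_congr rfl fun y _ => h1 y, Finset.sum_comm]
  refine Finset.sum_congr rfl fun s _ => ?_
  have h2 : ∀ y : Fin k → T, (if ysig f k s = y then pathW μ Q k s * φ y else 0)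
      = if ysig f k s = y then pathW μ Q k s * φ (ysig f k s) else 0 := by
    intro y
    by_cases h : ysig f k s = y
    · rw [if_pos h, if_pos h, h]
    · rw [if_neg h, if_neg h]
  rw [Finset.sum_congr rfl fun y _ => h2 y, Finset.sum_ite_eq Finset.univ (ysig f k s)]
  simp

end Aux

/-- Let `(V_k)` be a Markov chain on a finite state space with an
irreducible and aperiodic transition matrix `Q`, stationary distribution `ν`, and an
initial distribution `μ` of full support. If, for the stationary hidden Markov chain
`Y_k^{(ν)} = f(V_k^{(ν)}, V_{k+1}^{(ν)})`, almost every realisation satisfies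
`-(1/k) log P[Y₁^{(ν)} = y₁, …, Y_k^{(ν)} = y_k] → H`, then also
`-(1/k) ∫ log P[Y₁ = y₁, …, Y_k = y_k] dP(y₁,y₂,…) → H` for the hidden chain `Y`
with initial distribution `μ`. -/
theorem hmm_entropy_expectation
    {S T : Type} [Fintype S] [DecidableEq S] [Nonempty S] [Fintype T] [DecidableEq T]
    (Q : S → S → ℝ) (hQ0 : ∀ s t, 0 ≤ Q s t) (hQ1 : ∀ s, ∑ t, Q s t = 1)
    (hirr : QIrreducible Q) (hap : QAperiodic Q)
    (ν : S → ℝ) (hν0 : ∀ s, 0 ≤ ν s) (hν1 : ∑ s, ν s = 1)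
    (hνstat : ∀ t, ∑ s, ν s * Q s t = ν t)
    (μ : S → ℝ) (hμ0 : ∀ s, 0 < μ s) (hμ1 : ∑ s, μ s = 1)
    (f : S → S → T)
    {Ω' : Type} [MeasurableSpace Ω'] (P' : Measure Ω') [IsProbabilityMeasure P']
    (V' : ℕ → Ω' → S) (hV' : IsMarkovChain P' V' ν Q)
    (H : ℝ) (hH : 0 ≤ H)
    (hstat : ∀ᵐ ω ∂P',
      Filter.Tendsto
        (fun k : ℕ => -(1 / (k : ℝ)) *
          Real.log (hmmProb ν Q f k (fun i : Fin k => f (V' (i : ℕ) ω) (V' ((i : ℕ) + 1) ω))))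
        Filter.atTop (nhds H)) :
    Filter.Tendsto
      (fun k : ℕ => -(1 / (k : ℝ)) *
        ∑ y : Fin k → T, hmmProb μ Q f k y * Real.log (hmmProb μ Q f k y))
      Filter.atTop (nhds H) := by
  classical
  have hνpos : ∀ t, 0 < ν t := nu_pos hQ0 hirr hν0 hν1 hνstat
  obtain ⟨r, hr0, hr1, hrQ⟩ := exists_r hQ0 hQ1
  obtain ⟨m0, hm0, hm01, hm0ν⟩ := exists_min_pos ν hνpos
  obtain ⟨K1, hK1, hK1b⟩ := exists_ratio μ ν hνpos
  obtain ⟨K2, hK2, hK2b⟩ := exists_ratio ν μ hμ0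
  have hμ0' : ∀ a, 0 ≤ μ a := fun a => (hμ0 a).le
  set c₀ : ℝ := -Real.log m0 - Real.log r with hc₀
  have hlm : Real.log m0 ≤ 0 := Real.log_nonpos hm0.le hm01
  have hlr : Real.log r ≤ 0 := Real.log_nonpos hr0.le hr1
  have hc₀0 : 0 ≤ c₀ := by rw [hc₀]; linarith
  set D : ℝ := |Real.log K1| + |Real.log K2| with hD
  set G : (k : ℕ) → (Fin k → T) → ℝ :=
    fun k y => -(1/(k:ℝ)) * Real.log (hmmProb ν Q f k y) with hG
  set M : ℕ → ℝ :=
    fun k => ∑ y : Fin k → T, hmmProb μ Q f k y * G k y with hM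
  set E : ℕ → ℝ := fun k => -(1/(k:ℝ)) * ∑ y : Fin k → T, hmmProb μ Q f k y *
    (Real.log (hmmProb μ Q f k y) - Real.log (hmmProb ν Q f k y)) with hE
  -- log bound for positive ν-probabilities
  have hlog : ∀ k : ℕ, 1 ≤ k → ∀ y : Fin k → T, 0 < hmmProb ν Q f k y →
      |Real.log (hmmProb ν Q f k y)| ≤ k * c₀ := by
    intro k hk y hy
    have hle1 := hmmProb_le_one (f := f) hν0 hQ0 hν1 hQ1 k y
    have hlb := hmmProb_pos_lower hν0 hm0ν hm0 hrQ hr0 hQ0 k y hy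
    have hlog1 : Real.log (hmmProb ν Q f k y) ≤ 0 := Real.log_nonpos hy.le hle1
    rw [abs_of_nonpos hlog1]
    have h2 : Real.log (m0 * r ^ k) ≤ Real.log (hmmProb ν Q f k y) :=
      Real.log_le_log (by positivity) hlb
    rw [Real.log_mul (ne_of_gt hm0) (by positivity), Real.log_pow] at h2
    have hk1 : (1 : ℝ) ≤ (k : ℝ) := by exact_mod_cast hk
    rw [hc₀]
    nlinarith
  -- decomposition
  have hAeq : ∀ k : ℕ, -(1/(k:ℝ)) *
      ∑ y : Fin k → T, hmmProb μ Q f k y * Real.log (hmmProb μ Q f k y)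
      = M k + E k := by
    intro k
    rw [hM, hE, hG]
    have hsplit : (∑ y : Fin k → T, hmmProb μ Q f k y * Real.log (hmmProb μ Q f k y))
        = (∑ y : Fin k → T, hmmProb μ Q f k y * Real.log (hmmProb ν Q f k y))
          + ∑ y : Fin k → T, hmmProb μ Q f k y *
            (Real.log (hmmProb μ Q f k y) - Real.log (hmmProb ν Q f k y)) := by
      rw [← Finset.sum_add_distrib]
      exact Finset.sum_congr rfl fun y _ => by ring
    rw [hsplit, mul_add]
    congr 1
    rw [Finset.mul_sum]
    exact Finset.sum_congr rfl fun y _ => by ring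
  -- the error term tends to zero
  have hEbound : ∀ k : ℕ, 1 ≤ k → |E k| ≤ D / k := by
    intro k hk
    have hkpos : (0:ℝ) < k := by exact_mod_cast hk
    have hterm : ∀ y : Fin k → T,
        |hmmProb μ Q f k y *
          (Real.log (hmmProb μ Q f k y) - Real.log (hmmProb ν Q f k y))|
        ≤ hmmProb μ Q f k y * D := by
      intro y
      rcases eq_or_lt_of_le (hmmProb_nonneg (f := f) hμ0' hQ0 k y) with h0 | h0
      · rw [← h0]; simp
      · have hPν : 0 < hmmProb ν Q f k y := by
          have h1 := hmmProb_le_mul (f := f) hK1b hQ0 k y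
          nlinarith [hmmProb_nonneg (f := f) hν0 hQ0 k y]
        have h1 : Real.log (hmmProb μ Q f k y) ≤ Real.log K1 + Real.log (hmmProb ν Q f k y) := by
          rw [← Real.log_mul (by linarith) (ne_of_gt hPν)]
          exact Real.log_le_log h0 (hmmProb_le_mul (f := f) hK1b hQ0 k y)
        have h2 : Real.log (hmmProb ν Q f k y) ≤ Real.log K2 + Real.log (hmmProb μ Q f k y) := by
          rw [← Real.log_mul (by linarith) (ne_of_gt h0)]
          exact Real.log_le_log hPν (hmmProb_le_mul (f := f) hK2b hQ0 k y)
        rw [abs_mul, abs_of_nonneg h0.le]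
        refine mul_le_mul_of_nonneg_left ?_ h0.le
        rw [hD]
        refine abs_le.2 ⟨?_, ?_⟩
        · have := le_abs_self (Real.log K2)
          have := abs_nonneg (Real.log K1)
          linarith
        · have := le_abs_self (Real.log K1)
          have := abs_nonneg (Real.log K2)
          linarith
    have habs : |∑ y : Fin k → T, hmmProb μ Q f k y *
        (Real.log (hmmProb μ Q f k y) - Real.log (hmmProb ν Q f k y))| ≤ D := by
      refine le_trans (Finset.abs_sum_le_sum_abs _ _) ?_
      refine le_trans (Finset.sum_le_sum fun y _ => hterm y) ?_
      rw [← Finset.sum_mul, sum_hmmProb hμ1 hQ1 k, one_mul]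
    rw [hE]
    rw [abs_mul, abs_neg, abs_of_nonneg (by positivity : (0:ℝ) ≤ 1/(k:ℝ))]
    calc 1/(k:ℝ) * |∑ y : Fin k → T, hmmProb μ Q f k y *
          (Real.log (hmmProb μ Q f k y) - Real.log (hmmProb ν Q f k y))|
        ≤ 1/(k:ℝ) * D := by
          exact mul_le_mul_of_nonneg_left habs (by positivity)
      _ = D / k := by ring
  have hEtend : Tendsto E atTop (𝓝 0) := by
    refine squeeze_zero_norm' ?_ (tendsto_const_div_atTop_nhds_zero_nat D)
    filter_upwards [eventually_ge_atTop 1] with k hk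
    rw [Real.norm_eq_abs]
    exact hEbound k hk
  -- path representation of the main term
  have hMpath : ∀ k : ℕ, M k = ∑ s : Fin (k+1) → S, pathW μ Q k s * G k (ysig f k s) :=
    fun k => sum_y_weight k (G k)
  -- bad-set masses tend to zero
  have hmass : ∀ ε : ℝ, 0 < ε →
      Tendsto (fun k => ∑ s ∈ Finset.univ.filter
          (fun s : Fin (k+1) → S => ¬ |G k (ysig f k s) - H| ≤ ε), pathW ν Q k s)
        atTop (𝓝 0) := by
    intro ε hε
    set N : Set Ω' := toMeasurable P' {ω | ¬ Tendsto
      (fun k : ℕ => -(1 / (k : ℝ)) *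
        Real.log (hmmProb ν Q f k (fun i : Fin k => f (V' (i : ℕ) ω) (V' ((i : ℕ) + 1) ω))))
      atTop (𝓝 H)} with hNdef
    have hN0 : P' N = 0 := by
      rw [hNdef, measure_toMeasurable]
      exact ae_iff.1 hstat
    refine bad_mass_tendsto hV' hν0 hQ0 hν1 hQ1 _ N hN0 ?_
    intro ω hω
    have hconv : Tendsto
        (fun k : ℕ => -(1 / (k : ℝ)) *
          Real.log (hmmProb ν Q f k (fun i : Fin k => f (V' (i : ℕ) ω) (V' ((i : ℕ) + 1) ω))))
        atTop (𝓝 H) := by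
      by_contra h
      exact hω (subset_toMeasurable P' _ h)
    obtain ⟨m, hm⟩ := Metric.tendsto_atTop.1 hconv ε hε
    refine ⟨m, fun k hk hmem => ?_⟩
    rw [Finset.mem_filter] at hmem
    refine hmem.2 ?_
    have hys : ysig f k (fun i : Fin (k+1) => V' (i : ℕ) ω)
        = fun i : Fin k => f (V' (i : ℕ) ω) (V' ((i : ℕ) + 1) ω) := rfl
    rw [hys, hG]
    have := hm k hk
    rw [Real.dist_eq] at this
    exact this.le
  -- main term tends to H
  have hMtend : Tendsto M atTop (𝓝 H) := by
    rw [Metric.tendsto_atTop]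
    intro ε hε
    have hε2 : 0 < ε/2 := by linarith
    have hC : 0 ≤ (c₀ + H) * K1 := mul_nonneg (by linarith) (by linarith)
    have h1 : ∀ᶠ k in atTop, ((c₀ + H) * K1) *
        (∑ s ∈ Finset.univ.filter
          (fun s : Fin (k+1) → S => ¬ |G k (ysig f k s) - H| ≤ ε/2), pathW ν Q k s) < ε/2 := by
      have h2 := (hmass (ε/2) hε2).const_mul ((c₀ + H) * K1)
      rw [mul_zero] at h2
      exact h2.eventually (gt_mem_nhds hε2)
    have hMb : ∀ k : ℕ, 1 ≤ k → |M k - H| ≤ ε/2 + ((c₀ + H) * K1) *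
        (∑ s ∈ Finset.univ.filter
          (fun s : Fin (k+1) → S => ¬ |G k (ysig f k s) - H| ≤ ε/2), pathW ν Q k s) := by
      intro k hk
      set bd : Finset (Fin (k+1) → S) :=
        Finset.univ.filter (fun s : Fin (k+1) → S => ¬ |G k (ysig f k s) - H| ≤ ε/2) with hbd
      set gd : Finset (Fin (k+1) → S) :=
        Finset.univ.filter (fun s : Fin (k+1) → S => |G k (ysig f k s) - H| ≤ ε/2) with hgd
      have hsum1 : ∑ s : Fin (k+1) → S, pathW μ Q k s = 1 := sum_pathW hμ1 hQ1 k
      have hMH : M k - H = ∑ s : Fin (k+1) → S, pathW μ Q k s * (G k (ysig f k s) - H) := by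
        rw [hMpath k]
        rw [show (∑ s : Fin (k+1) → S, pathW μ Q k s * (G k (ysig f k s) - H))
          = (∑ s : Fin (k+1) → S, pathW μ Q k s * G k (ysig f k s))
            - (∑ s : Fin (k+1) → S, pathW μ Q k s) * H by
            rw [Finset.sum_mul, ← Finset.sum_sub_distrib]
            exact Finset.sum_congr rfl fun s _ => by ring]
        rw [hsum1, one_mul]
      rw [hMH]
      refine le_trans (Finset.abs_sum_le_sum_abs _ _) ?_
      have habsm : ∀ s : Fin (k+1) → S, |pathW μ Q k s * (G k (ysig f k s) - H)|
          = pathW μ Q k s * |G k (ysig f k s) - H| := by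
        intro s
        rw [abs_mul, abs_of_nonneg (pathW_nonneg hμ0' hQ0 k s)]
      rw [Finset.sum_congr rfl fun s _ => habsm s]
      rw [← Finset.sum_filter_add_sum_filter_not Finset.univ
        (fun s : Fin (k+1) → S => |G k (ysig f k s) - H| ≤ ε/2)]
      have hgood : (∑ s ∈ Finset.univ.filter
          (fun s : Fin (k+1) → S => |G k (ysig f k s) - H| ≤ ε/2),
            pathW μ Q k s * |G k (ysig f k s) - H|) ≤ ε/2 := by
        refine le_trans (Finset.sum_le_sum fun s hs =>
          mul_le_mul_of_nonneg_left (Finset.mem_filter.1 hs).2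
            (pathW_nonneg hμ0' hQ0 k s)) ?_
        rw [← Finset.sum_mul]
        have hle1 : (∑ s ∈ Finset.univ.filter
            (fun s : Fin (k+1) → S => |G k (ysig f k s) - H| ≤ ε/2), pathW μ Q k s) ≤ 1 := by
          rw [← hsum1]
          exact Finset.sum_le_sum_of_subset_of_nonneg (Finset.filter_subset _ _)
            (fun s _ _ => pathW_nonneg hμ0' hQ0 k s)
        nlinarith
      have hbad : (∑ s ∈ Finset.univ.filter
          (fun s : Fin (k+1) → S => ¬ |G k (ysig f k s) - H| ≤ ε/2),
            pathW μ Q k s * |G k (ysig f k s) - H|)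
          ≤ ((c₀ + H) * K1) * ∑ s ∈ Finset.univ.filter
            (fun s : Fin (k+1) → S => ¬ |G k (ysig f k s) - H| ≤ ε/2), pathW ν Q k s := by
        rw [Finset.mul_sum]
        refine Finset.sum_le_sum fun s _ => ?_
        rcases eq_or_lt_of_le (pathW_nonneg hμ0' hQ0 k s) with h0 | h0
        · rw [← h0, zero_mul]
          have := pathW_nonneg hν0 hQ0 k s
          nlinarith
        · have hprod : 0 < ∏ i : Fin k, Q (s i.castSucc) (s i.succ) := by
            rcases lt_or_eq_of_le (Finset.prod_nonneg
              fun (i : Fin k) (_ : i ∈ Finset.univ) => hQ0 (s i.castSucc) (s i.succ)) with h|h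
            · exact h
            · exfalso
              rw [pathW, ← h, mul_zero] at h0
              exact lt_irrefl _ h0
          have hwv : 0 < pathW ν Q k s := mul_pos (hνpos _) hprod
          have hPν : 0 < hmmProb ν Q f k (ysig f k s) :=
            lt_of_lt_of_le hwv (pathW_le_hmmProb hν0 hQ0 k s)
          have hlg := hlog k hk _ hPν
          have hGb : |G k (ysig f k s)| ≤ c₀ := by
            rw [hG]
            dsimp only
            rw [abs_mul, abs_neg, abs_of_nonneg (by positivity : (0:ℝ) ≤ 1/(k:ℝ))]
            have hkpos : (0:ℝ) < k := by exact_mod_cast hk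
            calc 1/(k:ℝ) * |Real.log (hmmProb ν Q f k (ysig f k s))|
                ≤ 1/(k:ℝ) * ((k:ℝ) * c₀) := by
                  exact mul_le_mul_of_nonneg_left hlg (by positivity)
              _ = c₀ := by field_simp
          have hGH : |G k (ysig f k s) - H| ≤ c₀ + H := by
            calc |G k (ysig f k s) - H| = |G k (ysig f k s) + -H| := by rw [sub_eq_add_neg]
              _ ≤ |G k (ysig f k s)| + |-H| := abs_add_le _ _
              _ = |G k (ysig f k s)| + H := by rw [abs_neg, abs_of_nonneg hH]
              _ ≤ c₀ + H := by linarith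
          calc pathW μ Q k s * |G k (ysig f k s) - H|
              ≤ pathW μ Q k s * (c₀ + H) := mul_le_mul_of_nonneg_left hGH h0.le
            _ ≤ (K1 * pathW ν Q k s) * (c₀ + H) := by
                refine mul_le_mul_of_nonneg_right (pathW_le_mul hK1b hQ0 k s) (by linarith)
            _ = (c₀ + H) * K1 * pathW ν Q k s := by ring
      linarith
    have h2 : ∀ᶠ k in atTop, dist (M k) H < ε := by
      filter_upwards [h1, eventually_ge_atTop 1] with k hk1 hk2
      rw [Real.dist_eq]
      exact lt_of_le_of_lt (hMb k hk2) (by linarith)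
    obtain ⟨n, hn⟩ := eventually_atTop.1 h2
    exact ⟨n, hn⟩
  have hfinal := hMtend.add hEtend
  rw [add_zero] at hfinal
  exact hfinal.congr fun k => (hAeq k).symm
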